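/- Let p be a prime with p ≡ 3 (mod 16). Then the equation w² = −2p·x⁴ − p·y⁴ + 2·z⁴ has, for every prime q, a solution (w, x, y, z) ∈ ℚ_q⁴ with (x, y, z) ≠ (0, 0, 0), and it also has a solution (w, x, y, z) ∈ ℝ⁴ with (x, y, z) ≠ (0, 0, 0). -/

import Mathlib

open Polynomial PadicInt

lemma padic_root (q : ℕ) [Fact q.Prime] (n : ℕ) (hn : ¬ (q ∣ n)) (c : ℤ_[q])
    (v : ZMod q) (hv : v ≠ 0) (hvc : v ^ n = PadicInt.toZMod c) :
    ∃ w : ℤ_[q], w ^ n = c := by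
  obtain ⟨a, ha⟩ : ∃ a : ℤ_[q], toZMod a = v := ⟨(v.val : ℤ_[q]), by
    simp [map_natCast, ZMod.natCast_val, ZMod.cast_id]⟩
  set F : Polynomial ℤ_[q] := X ^ n - C c with hF
  have hder : F.derivative = C (n : ℤ_[q]) * X ^ (n - 1) := by
    simp [hF, derivative_X_pow]
  have hFa : F.eval a = a ^ n - c := by simp [hF]
  have hFa' : F.derivative.eval a = (n : ℤ_[q]) * a ^ (n - 1) := by simp [hder]
  have h1 : ‖F.eval a‖ < 1 := by
    rw [hFa, norm_lt_one_iff_dvd, ← Ideal.mem_span_singleton, ← maximalIdeal_eq_span_p,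
      ← ker_toZMod, RingHom.mem_ker, map_sub, map_pow, ha, hvc, sub_self]
  have h2 : ‖F.derivative.eval a‖ = 1 := by
    refine le_antisymm (norm_le_one _) (not_lt.mp ?_)
    rw [hFa', norm_lt_one_iff_dvd, ← Ideal.mem_span_singleton, ← maximalIdeal_eq_span_p,
      ← ker_toZMod, RingHom.mem_ker, map_mul, map_pow, ha, map_natCast]
    intro h
    rcases mul_eq_zero.mp h with h | h
    · exact hn ((ZMod.natCast_eq_zero_iff n q).mp h)
    · exact hv ((pow_eq_zero_iff'.mp h).1)
  have hlt : ‖F.eval a‖ < ‖F.derivative.eval a‖ ^ 2 := by rw [h2]; simpa using h1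
  obtain ⟨z, hz, -⟩ := hensels_lemma hlt
  have : z ^ n - c = 0 := by simpa [hF] using hz
  exact ⟨z, sub_eq_zero.mp this⟩

lemma padic2_sqrt (c : ℤ_[2]) (h : (8 : ℤ_[2]) ∣ 1 - c) : ∃ w : ℤ_[2], w ^ 2 = c := by
  set F : Polynomial ℤ_[2] := X ^ 2 - C c with hF
  have hFa : F.eval 1 = 1 - c := by simp [hF]
  have hFa' : F.derivative.eval 1 = 2 := by simp [hF]; norm_num
  have h1 : ‖F.eval 1‖ ≤ ((2 : ℕ) : ℝ) ^ (-(3 : ℕ) : ℤ) := by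
    rw [hFa, norm_le_pow_iff_mem_span_pow]
    exact Ideal.mem_span_singleton.mpr (by convert h using 1; norm_num)
  have h2 : ‖F.derivative.eval 1‖ = 2⁻¹ := by
    rw [hFa']
    have : ((2 : ℕ) : ℤ_[2]) = 2 := by norm_num
    rw [← this, PadicInt.norm_p]
    norm_num
  have hlt : ‖F.eval 1‖ < ‖F.derivative.eval 1‖ ^ 2 := by
    rw [h2]
    refine lt_of_le_of_lt h1 ?_
    norm_num
  obtain ⟨z, hz, -⟩ := hensels_lemma hlt
  have : z ^ 2 - c = 0 := by simpa [hF] using hz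
  exact ⟨z, sub_eq_zero.mp this⟩

lemma zmod_fourth_root (p : ℕ) [Fact p.Prime] (hmod : p % 8 = 3) :
    ∃ v : ZMod p, v ^ 4 = -2 := by
  have hp2 : p ≠ 2 := by omega
  have h2ne : (2 : ZMod p) ≠ 0 := by
    intro h
    have hd : p ∣ 2 := (ZMod.natCast_eq_zero_iff 2 p).mp (by exact_mod_cast h)
    exact hp2 ((Nat.prime_dvd_prime_iff_eq Fact.out Nat.prime_two).mp hd)
  obtain ⟨s, hs⟩ : IsSquare (-2 : ZMod p) :=
    (ZMod.exists_sq_eq_neg_two_iff hp2).mpr (Or.inr hmod)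
  have hsne : s ≠ 0 := by rintro rfl; exact h2ne (neg_eq_zero.mp (by simpa using hs.symm))
  have key : IsSquare s ∨ IsSquare (-s) := by
    by_contra hcon
    push_neg at hcon
    have c1 : quadraticChar (ZMod p) s = -1 :=
      quadraticChar_neg_one_iff_not_isSquare.mpr hcon.1
    have c2 : quadraticChar (ZMod p) (-s) = -1 :=
      quadraticChar_neg_one_iff_not_isSquare.mpr hcon.2
    have cm : quadraticChar (ZMod p) (s * -s) = 1 := by rw [map_mul, c1, c2]; ring
    have hss : s * -s = 2 := by rw [mul_neg, ← hs]; ring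
    rw [hss] at cm
    have : IsSquare (2 : ZMod p) := (quadraticChar_one_iff_isSquare h2ne).mp cm
    rw [ZMod.exists_sq_eq_two_iff hp2] at this
    omega
  rcases key with ⟨t, ht⟩ | ⟨t, ht⟩ <;> refine ⟨t, ?_⟩
  · have : t ^ 4 = (t * t) * (t * t) := by ring
    rw [this, ← ht, ← hs]
  · have : t ^ 4 = (t * t) * (t * t) := by ring
    rw [this, ← ht]
    rw [show -s * -s = s * s by ring, ← hs]

lemma zmod_prime_cast_ne_zero (q r : ℕ) [Fact q.Prime] (hr : r.Prime) (hne : q ≠ r) :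
    ((r : ZMod q)) ≠ 0 := by
  intro h
  have hd : q ∣ r := (ZMod.natCast_eq_zero_iff r q).mp h
  exact hne ((Nat.prime_dvd_prime_iff_eq Fact.out hr).mp hd)


/-- For a prime `p ≡ 3 (mod 16)`, the surface `w² = −2p·x⁴ − p·y⁴ + 2·z⁴` has points
over every `q`-adic field `ℚ_q` and over `ℝ`, with `(x, y, z) ≠ (0, 0, 0)`. -/
theorem delPezzo_two_p_everywhere_locally_solvable (p : ℕ) (hp : p.Prime)
    (hmod : p % 16 = 3) :
    (∀ (q : ℕ) [Fact q.Prime],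
      ∃ w x y z : ℚ_[q], w ^ 2 = -2 * p * x ^ 4 - p * y ^ 4 + 2 * z ^ 4 ∧
        (x, y, z) ≠ (0, 0, 0)) ∧
    (∃ w x y z : ℝ, w ^ 2 = -2 * p * x ^ 4 - p * y ^ 4 + 2 * z ^ 4 ∧
      (x, y, z) ≠ (0, 0, 0)) := by
  have hp2 : p ≠ 2 := by omega
  have hp8 : p % 8 = 3 := by omega
  constructor
  · intro q instq
    by_cases hq2 : q = 2
    · subst hq2
      have hdvd : (8 : ℤ_[2]) ∣ 1 - ((2 : ℤ_[2]) - 3 * (p : ℤ_[2])) := by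
        have h1 : (1 - ((2 : ℤ_[2]) - 3 * (p : ℤ_[2]))) = ((3 * (p : ℤ) - 1 : ℤ) : ℤ_[2]) := by
          push_cast; ring
        obtain ⟨k, hk⟩ : (8 : ℤ) ∣ (3 * (p : ℤ) - 1) := by omega
        exact ⟨((k : ℤ) : ℤ_[2]), by rw [h1, hk]; push_cast; ring⟩
      obtain ⟨w, hw⟩ := padic2_sqrt _ hdvd
      have c2q : ((2 : ℤ_[2]) : ℚ_[2]) = 2 := by norm_cast
      have c3q : ((3 : ℤ_[2]) : ℚ_[2]) = 3 := by norm_cast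
      have hw' := congrArg (fun t : ℤ_[2] => (t : ℚ_[2])) hw
      push_cast [c2q, c3q] at hw'
      refine ⟨(w : ℚ_[2]), 1, 1, 1, ?_, by simp⟩
      linear_combination hw'
    · haveI hqP : Fact q.Prime := instq
      by_cases hqp : q = p
      · subst hqp
        obtain ⟨v, hv4⟩ := zmod_fourth_root q hp8
        have h2ne : (2 : ZMod q) ≠ 0 := by
          have := zmod_prime_cast_ne_zero q 2 Nat.prime_two hq2
          exact_mod_cast this
        have hvne : v ≠ 0 := by
          rintro rfl
          exact h2ne (neg_eq_zero.mp (by simpa using hv4.symm))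
        have hq4 : ¬ q ∣ 4 := by
          intro h
          have : q ∣ 2 := Nat.Prime.dvd_of_dvd_pow (n := 2) (Fact.out) (by norm_num at h ⊢; exact h)
          exact hq2 ((Nat.prime_dvd_prime_iff_eq Fact.out Nat.prime_two).mp this)
        have h2z : PadicInt.toZMod (2 : ℤ_[q]) = 2 := map_ofNat _ 2
        have htoc : PadicInt.toZMod (-(2 + (q : ℤ_[q]))) = -2 := by
          simp [h2z]
        obtain ⟨y, hy⟩ := padic_root q 4 hq4 (-(2 + (q : ℤ_[q]))) v hvne (by rw [htoc]; exact hv4)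
        have c2q : ((2 : ℤ_[q]) : ℚ_[q]) = 2 := by norm_cast
        have hy' := congrArg (fun t : ℤ_[q] => (t : ℚ_[q])) hy
        push_cast [c2q] at hy'
        refine ⟨(q : ℚ_[q]), 1, (y : ℚ_[q]), 0, ?_, by simp⟩
        linear_combination (q : ℚ_[q]) * hy'
      · have h2ne : (2 : ZMod q) ≠ 0 := by
          have := zmod_prime_cast_ne_zero q 2 Nat.prime_two hq2
          exact_mod_cast this
        have hpne : ((p : ZMod q)) ≠ 0 := zmod_prime_cast_ne_zero q p hp hqp
        have hq2' : ¬ q ∣ 2 := by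
          intro h
          exact hq2 ((Nat.prime_dvd_prime_iff_eq Fact.out Nat.prime_two).mp h)
        have h2z : PadicInt.toZMod (2 : ℤ_[q]) = 2 := map_ofNat _ 2
        have c2q : ((2 : ℤ_[q]) : ℚ_[q]) = 2 := by norm_cast
        by_cases h2 : IsSquare (2 : ZMod q)
        · obtain ⟨s, hs⟩ := h2
          have hsne : s ≠ 0 := by rintro rfl; exact h2ne (by simpa using hs)
          obtain ⟨w, hw⟩ := padic_root q 2 hq2' (2 : ℤ_[q]) s hsne
            (by rw [pow_two, ← hs]; exact h2z.symm)
          have hw' := congrArg (fun t : ℤ_[q] => (t : ℚ_[q])) hw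
          push_cast [c2q] at hw'
          refine ⟨(w : ℚ_[q]), 0, 0, 1, ?_, by simp⟩
          linear_combination hw'
        · by_cases hnp : IsSquare (-(p : ZMod q))
          · obtain ⟨s, hs⟩ := hnp
            have hsne : s ≠ 0 := by
              rintro rfl; exact hpne (neg_eq_zero.mp (by simpa using hs.symm))
            obtain ⟨w, hw⟩ := padic_root q 2 hq2' (-(p : ℤ_[q])) s hsne
              (by rw [pow_two, ← hs]; simp)
            have hw' := congrArg (fun t : ℤ_[q] => (t : ℚ_[q])) hw
            push_cast [c2q] at hw'
            refine ⟨(w : ℚ_[q]), 0, 1, 0, ?_, by simp⟩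
            linear_combination hw'
          · have c1 : quadraticChar (ZMod q) 2 = -1 :=
              quadraticChar_neg_one_iff_not_isSquare.mpr h2
            have c2 : quadraticChar (ZMod q) (-(p : ZMod q)) = -1 :=
              quadraticChar_neg_one_iff_not_isSquare.mpr hnp
            have cm : quadraticChar (ZMod q) (2 * -(p : ZMod q)) = 1 := by
              rw [map_mul, c1, c2]; ring
            have hsq : IsSquare (2 * -(p : ZMod q)) :=
              (quadraticChar_one_iff_isSquare (mul_ne_zero h2ne (neg_ne_zero.mpr hpne))).mp cm
            obtain ⟨s, hs⟩ := hsq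
            have hsne : s ≠ 0 := by
              rintro rfl
              exact (mul_ne_zero h2ne (neg_ne_zero.mpr hpne)) (by simpa using hs.symm)
            have htoc2 : PadicInt.toZMod (-(2 * (p : ℤ_[q]))) = 2 * -(p : ZMod q) := by
              rw [map_neg, map_mul, h2z, map_natCast]; ring
            obtain ⟨w, hw⟩ := padic_root q 2 hq2' (-(2 * (p : ℤ_[q]))) s hsne
              (by rw [pow_two, ← hs, htoc2])
            have hw' := congrArg (fun t : ℤ_[q] => (t : ℚ_[q])) hw
            push_cast [c2q] at hw'
            refine ⟨(w : ℚ_[q]), 1, 0, 0, ?_, by simp⟩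
            linear_combination hw'
  · exact ⟨Real.sqrt 2, 0, 0, 1,
      by rw [Real.sq_sqrt (by norm_num : (0:ℝ) ≤ 2)]; ring, by simp⟩
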